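/- Let π be a permutation of {1,…,n} whose Rothe diagram is the Young diagram of a weakly decreasing sequence μ = (μ_1,…,μ_n) of nonnegative integers, i.e., D(π) = {(i,j) : 1 ≤ i ≤ n, 1 ≤ j ≤ μ_i}. Suppose 1 ≤ i < n, μ_i > μ_{i+1}, and π(i) = μ_i + 1. Let t be the transposition exchanging the values μ_i and μ_i + 1. Then D(t ∘ π) = D(π) \ {(i, μ_i)}, i.e., left multiplication by t deletes exactly the last cell of row i of the Rothe diagram. -/

import Mathlib

/-- The Rothe diagram of a permutation of `{0, …, n-1}` (0-based indexing):
cell `(i,j)` belongs to the diagram iff `j < w i` and `i < w⁻¹ j`. -/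
def rothe {n : ℕ} (w : Equiv.Perm (Fin n)) : Finset (Fin n × Fin n) :=
  Finset.univ.filter fun c => c.2 < w c.1 ∧ c.1 < w⁻¹ c.2

/-- `ℓ(w)`: the number of inversions of `w`. -/
def plen {n : ℕ} (w : Equiv.Perm (Fin n)) : ℕ :=
  (Finset.univ.filter fun p : Fin n × Fin n => p.1 < p.2 ∧ w p.2 < w p.1).card

/-- A standard Rothe tableau of `w`: a labelling of the cells of the Rothe diagram by
`1, …, ℓ(w)` (bijectively), strictly increasing along rows and columns; the labelling
is recorded as a function on all of `Fin n × Fin n` that vanishes off the diagram. -/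
def IsSRT {n : ℕ} (w : Equiv.Perm (Fin n)) (T : Fin n × Fin n → ℕ) : Prop :=
  Set.BijOn T ↑(rothe w) (Set.Icc 1 (plen w)) ∧
  (∀ c, c ∉ rothe w → T c = 0) ∧
  (∀ c ∈ rothe w, ∀ c' ∈ rothe w, c.1 = c'.1 → c.2 < c'.2 → T c < T c') ∧
  (∀ c ∈ rothe w, ∀ c' ∈ rothe w, c.2 = c'.2 → c.1 < c'.1 → T c < T c')

noncomputable def srtCard {n : ℕ} (w : Equiv.Perm (Fin n)) : ℕ :=
  Nat.card {T : Fin n × Fin n → ℕ // IsSRT w T}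

/-- The hook of a cell of the Rothe diagram. -/
def hook {n : ℕ} (w : Equiv.Perm (Fin n)) (c : Fin n × Fin n) : Finset (Fin n × Fin n) :=
  (rothe w).filter fun d => (d.1 = c.1 ∧ c.2 ≤ d.2) ∨ (d.2 = c.2 ∧ c.1 ≤ d.1)

/-- A balanced Rothe tableau of `w`. -/
def IsBRT {n : ℕ} (w : Equiv.Perm (Fin n)) (T : Fin n × Fin n → ℕ) : Prop :=
  Set.BijOn T ↑(rothe w) (Set.Icc 1 (plen w)) ∧
  (∀ c, c ∉ rothe w → T c = 0) ∧
  ∀ c ∈ rothe w,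
    ((hook w c).filter fun d => T d < T c).card
      = ((rothe w).filter fun d => d.1 = c.1 ∧ c.2 < d.2).card

noncomputable def brtCard {n : ℕ} (w : Equiv.Perm (Fin n)) : ℕ :=
  Nat.card {T : Fin n × Fin n → ℕ // IsBRT w T}

/-- `w` contains the pattern `p`. -/
def ContainsPattern {n k : ℕ} (w : Equiv.Perm (Fin n)) (p : Equiv.Perm (Fin k)) : Prop :=
  ∃ f : Fin k → Fin n, StrictMono f ∧ ∀ s t : Fin k, w (f s) < w (f t) ↔ p s < p t

/-- The pattern 2413 (0-based one-line notation `1 3 0 2`). -/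
def p2413 : Equiv.Perm (Fin 4) :=
  ⟨![1,3,0,2], ![2,0,3,1], by intro x; fin_cases x <;> rfl, by intro x; fin_cases x <;> rfl⟩

def p2431 : Equiv.Perm (Fin 4) :=
  ⟨![1,3,2,0], ![3,0,2,1], by intro x; fin_cases x <;> rfl, by intro x; fin_cases x <;> rfl⟩

def p3142 : Equiv.Perm (Fin 4) :=
  ⟨![2,0,3,1], ![1,3,0,2], by intro x; fin_cases x <;> rfl, by intro x; fin_cases x <;> rfl⟩

def p4132 : Equiv.Perm (Fin 4) :=
  ⟨![3,0,2,1], ![1,3,2,0], by intro x; fin_cases x <;> rfl, by intro x; fin_cases x <;> rfl⟩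

def p4213 : Equiv.Perm (Fin 4) :=
  ⟨![3,1,0,2], ![2,1,3,0], by intro x; fin_cases x <;> rfl, by intro x; fin_cases x <;> rfl⟩

def p3241 : Equiv.Perm (Fin 4) :=
  ⟨![2,1,3,0], ![3,1,0,2], by intro x; fin_cases x <;> rfl, by intro x; fin_cases x <;> rfl⟩

def p132 : Equiv.Perm (Fin 3) :=
  ⟨![0,2,1], ![0,2,1], by intro x; fin_cases x <;> rfl, by intro x; fin_cases x <;> rfl⟩

/-- The adjacent transposition `s_a` (0-based: swaps `a` and `a+1`), as a permutation
of `Fin n`; it is the identity when `a+1 ≥ n`. -/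
def adjT (n a : ℕ) : Equiv.Perm (Fin n) :=
  if h : a + 1 < n then Equiv.swap ⟨a, Nat.lt_of_succ_lt h⟩ ⟨a + 1, h⟩ else 1

/-- Reduced words of `w`, written with 0-based letters `a` (`0 ≤ a ≤ n-2`). -/
def IsReducedWord {n : ℕ} (w : Equiv.Perm (Fin n)) (L : List ℕ) : Prop :=
  (∀ a ∈ L, a + 1 < n) ∧ (L.map (adjT n)).prod = w ∧ L.length = plen w

noncomputable def rwCard {n : ℕ} (w : Equiv.Perm (Fin n)) : ℕ :=
  Nat.card {L : List ℕ // IsReducedWord w L}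

/-- Direct sum of two permutations. -/
def dsum {k m : ℕ} (u : Equiv.Perm (Fin k)) (v : Equiv.Perm (Fin m)) :
    Equiv.Perm (Fin (k + m)) :=
  finSumFinEquiv.permCongr (Equiv.sumCongr u v)

def dsumSig (p q : Σ m : ℕ, Equiv.Perm (Fin m)) : Σ m : ℕ, Equiv.Perm (Fin m) :=
  ⟨p.1 + q.1, dsum p.2 q.2⟩

/-- The direct sum `w¹ ⊕ w² ⊕ ⋯ ⊕ wᵏ` of a list of permutations. -/
def dsumList (l : List (Σ m : ℕ, Equiv.Perm (Fin m))) : Σ m : ℕ, Equiv.Perm (Fin m) :=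
  l.foldr dsumSig ⟨0, 1⟩

/-- `w` is decomposable if it maps `{0,…,k-1}` onto itself for some `0 < k < n`. -/
def Decomposable {n : ℕ} (w : Equiv.Perm (Fin n)) : Prop :=
  ∃ k : ℕ, 0 < k ∧ k < n ∧ ∀ i : Fin n, (i : ℕ) < k → ((w i : ℕ)) < k

/-- The Lehmer code of `w`. -/
def lehmer {n : ℕ} (w : Equiv.Perm (Fin n)) (i : Fin n) : ℕ :=
  (Finset.univ.filter fun j : Fin n => i < j ∧ w j < w i).card

/-- The cells of the Young diagram of `lam`. -/
def yCells {m : ℕ} (lam : Fin m → ℕ) : Set (Fin m × ℕ) :=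
  {c | c.2 < lam c.1}

/-- A standard Young tableau of shape `lam`. -/
def IsSYT {m : ℕ} (lam : Fin m → ℕ) (T : Fin m × ℕ → ℕ) : Prop :=
  Set.BijOn T (yCells lam) (Set.Icc 1 (∑ i, lam i)) ∧
  (∀ c, c ∉ yCells lam → T c = 0) ∧
  (∀ c ∈ yCells lam, ∀ c' ∈ yCells lam, c.1 = c'.1 → c.2 < c'.2 → T c < T c') ∧
  (∀ c ∈ yCells lam, ∀ c' ∈ yCells lam, c.2 = c'.2 → c.1 < c'.1 → T c < T c')

/-- `f^λ`: the number of standard Young tableaux of shape `lam`. -/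
noncomputable def sytCard {m : ℕ} (lam : Fin m → ℕ) : ℕ :=
  Nat.card {T : Fin m × ℕ → ℕ // IsSYT lam T}

theorem rothe_aux {n : ℕ} (π : Equiv.Perm (Fin n)) (μ : Fin n → ℕ)
    (hdec : ∀ i j : Fin n, i ≤ j → μ j ≤ μ i)
    (hD : rothe π = Finset.univ.filter fun c : Fin n × Fin n => (c.2 : ℕ) < μ c.1)
    (i : ℕ) (hi : i + 1 < n) (ii : Fin n) (hiic : (ii : ℕ) = i)
    (a b : Fin n) (hac : (a : ℕ) = μ ii - 1) (hbc : (b : ℕ) = μ ii)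
    (hmu : μ ⟨i + 1, hi⟩ < μ ii)
    (hval : π ii = b) :
    rothe (Equiv.swap a b * π) = (rothe π).erase (ii, a) := by
  have hm1 : 1 ≤ μ ii := Nat.lt_of_le_of_lt (Nat.zero_le _) hmu
  have hmem : ∀ r c : Fin n,
      ((c : ℕ) < ((π r : Fin n) : ℕ) ∧ (r : ℕ) < ((π⁻¹ c : Fin n) : ℕ)) ↔ (c : ℕ) < μ r := by
    intro r c
    have h := Finset.ext_iff.mp hD (r, c)
    simp only [rothe, Finset.mem_filter, Finset.mem_univ, true_and, Fin.lt_def] at h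
    exact h
  have hinvb : π⁻¹ b = ii := by rw [← hval]; exact Equiv.symm_apply_apply π ii
  have hk : i < ((π⁻¹ a : Fin n) : ℕ) := by
    have h := ((hmem ii a).mpr (by omega)).2
    omega
  have hlow : ∀ r : Fin n, (r : ℕ) ≤ i → μ ii ≤ μ r := fun r h =>
    hdec r ii (Fin.le_def.mpr (by omega))
  have hhigh : ∀ r : Fin n, i < (r : ℕ) → μ r < μ ii := fun r h =>
    lt_of_le_of_lt (hdec ⟨i + 1, hi⟩ r (Fin.le_def.mpr (by simpa using h))) hmu
  ext ⟨r, c⟩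
  rw [hD]
  simp only [rothe, Finset.mem_filter, Finset.mem_univ, true_and, Finset.mem_erase,
    Prod.mk.injEq, not_and, ne_eq, Equiv.Perm.mul_apply, mul_inv_rev, Equiv.swap_inv,
    Fin.lt_def]
  constructor
  · rintro ⟨h1, h2⟩
    by_cases hca : c = a
    · have hsw : Equiv.swap a b c = b := by rw [hca]; exact Equiv.swap_apply_left a b
      have hcc : (c : ℕ) = μ ii - 1 := by rw [hca]; exact hac
      rw [hsw, hinvb] at h2
      have hri : (r : ℕ) < i := by omega
      refine ⟨fun hrii _ => by rw [hrii, hiic] at hri; omega, ?_⟩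
      have := hlow r (le_of_lt hri)
      omega
    · by_cases hcb : c = b
      · have hsw : Equiv.swap a b c = a := by rw [hcb]; exact Equiv.swap_apply_right a b
        have hcc : (c : ℕ) = μ ii := by rw [hcb]; exact hbc
        rw [hsw] at h2
        have hra : π r ≠ a := by
          intro h
          rw [h, Equiv.swap_apply_left] at h1
          omega
        have hrb : π r ≠ b := by
          intro h
          rw [h, Equiv.swap_apply_right] at h1
          omega
        rw [Equiv.swap_apply_of_ne_of_ne hra hrb] at h1
        have hrle : ¬ i < (r : ℕ) := by
          intro hgt
          have h3 := (hmem r a).mp ⟨by omega, h2⟩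
          have := hhigh r hgt
          omega
        have hrnei : r ≠ ii := fun h => hrb (by rw [h, hval])
        have hrlt : (r : ℕ) < i := by
          rcases Nat.lt_or_ge (r : ℕ) i with h | h
          · exact h
          · exact absurd (Fin.ext (by omega)) hrnei
        refine ⟨fun _ hceqa => by rw [hceqa, hac] at hcc; omega, ?_⟩
        exact (hmem r c).mp ⟨h1, by rw [hcb, hinvb]; omega⟩
      · have hfc : Equiv.swap a b c = c := Equiv.swap_apply_of_ne_of_ne hca hcb
        rw [hfc] at h2
        have hcna : (c : ℕ) ≠ (a : ℕ) := fun h => hca (Fin.ext h)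
        refine ⟨fun _ h => hca h, ?_⟩
        by_cases hrb : π r = b
        · have hrii : r = ii := π.injective (by rw [hrb, hval])
          rw [hrb, Equiv.swap_apply_right] at h1
          rw [hrii]
          omega
        · by_cases hra : π r = a
          · rw [hra, Equiv.swap_apply_left] at h1
            exact (hmem r c).mp ⟨by rw [hra]; omega, h2⟩
          · rw [Equiv.swap_apply_of_ne_of_ne hra hrb] at h1
            exact (hmem r c).mp ⟨h1, h2⟩
  · rintro ⟨hne, hcmu⟩
    by_cases hca : c = a
    · have hsw : Equiv.swap a b c = b := by rw [hca]; exact Equiv.swap_apply_left a b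
      have hcc : (c : ℕ) = μ ii - 1 := by rw [hca]; exact hac
      have hrnei : r ≠ ii := fun h => hne h hca
      have hrle : ¬ i < (r : ℕ) := by
        intro hgt
        have := hhigh r hgt
        omega
      have hrlt : (r : ℕ) < i := by
        rcases Nat.lt_or_ge (r : ℕ) i with h | h
        · exact h
        · exact absurd (Fin.ext (by omega)) hrnei
      obtain ⟨h1, h2⟩ := (hmem r c).mpr hcmu
      have hra : π r ≠ a := fun h => by rw [h, ← hca] at h1; omega
      have hrb : π r ≠ b := fun h => hrnei (π.injective (h.trans hval.symm))
      rw [hsw, Equiv.swap_apply_of_ne_of_ne hra hrb, hinvb]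
      exact ⟨h1, by omega⟩
    · by_cases hcb : c = b
      · have hsw : Equiv.swap a b c = a := by rw [hcb]; exact Equiv.swap_apply_right a b
        have hcc : (c : ℕ) = μ ii := by rw [hcb]; exact hbc
        obtain ⟨h1, h2⟩ := (hmem r c).mpr hcmu
        rw [hcb, hinvb] at h2
        have hra : π r ≠ a := fun h => by rw [h] at h1; omega
        have hrb : π r ≠ b := fun h => by rw [h] at h1; omega
        rw [hsw, Equiv.swap_apply_of_ne_of_ne hra hrb]
        exact ⟨h1, by omega⟩
      · have hcna : (c : ℕ) ≠ (a : ℕ) := fun h => hca (Fin.ext h)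
        have hfc : Equiv.swap a b c = c := Equiv.swap_apply_of_ne_of_ne hca hcb
        rw [hfc]
        obtain ⟨h1, h2⟩ := (hmem r c).mpr hcmu
        by_cases hrii : r = ii
        · rw [hrii] at h2 hcmu
          rw [hrii, hval, Equiv.swap_apply_right]
          exact ⟨by omega, h2⟩
        · have hrb : π r ≠ b := fun h => hrii (π.injective (h.trans hval.symm))
          by_cases hra : π r = a
          · rw [hra, Equiv.swap_apply_left]
            rw [hra] at h1
            exact ⟨by omega, h2⟩
          · rw [Equiv.swap_apply_of_ne_of_ne hra hrb]
            exact ⟨h1, h2⟩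

/-- if `D(π)` is the Young diagram of a weakly decreasing `μ`,
`μ_i > μ_{i+1}` and the value of `π` at row `i` is `μ_i` (0-based; i.e. `μ_i + 1`
in 1-based terms), then left multiplication by the transposition of the values
`μ_i - 1` and `μ_i` (0-based; `μ_i` and `μ_i + 1` in 1-based terms) deletes
exactly the last cell of row `i` of the Rothe diagram. -/
theorem rothe_swap_mul_eq_erase {n : ℕ} (π : Equiv.Perm (Fin n)) (μ : Fin n → ℕ)
    (hdec : ∀ i j : Fin n, i ≤ j → μ j ≤ μ i)
    (hD : rothe π = Finset.univ.filter fun c : Fin n × Fin n => (c.2 : ℕ) < μ c.1)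
    (i : ℕ) (hi : i + 1 < n)
    (hmu : μ ⟨i + 1, hi⟩ < μ ⟨i, Nat.lt_of_succ_lt hi⟩)
    (hval : ((π ⟨i, Nat.lt_of_succ_lt hi⟩ : Fin n) : ℕ) = μ ⟨i, Nat.lt_of_succ_lt hi⟩) :
    rothe (Equiv.swap
        (⟨μ ⟨i, Nat.lt_of_succ_lt hi⟩ - 1,
          lt_of_le_of_lt (Nat.sub_le _ 1)
            (hval ▸ (π ⟨i, Nat.lt_of_succ_lt hi⟩).isLt)⟩ : Fin n)
        (⟨μ ⟨i, Nat.lt_of_succ_lt hi⟩,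
          hval ▸ (π ⟨i, Nat.lt_of_succ_lt hi⟩).isLt⟩ : Fin n) * π)
      = (rothe π).erase
          (⟨i, Nat.lt_of_succ_lt hi⟩,
           ⟨μ ⟨i, Nat.lt_of_succ_lt hi⟩ - 1,
            lt_of_le_of_lt (Nat.sub_le _ 1)
              (hval ▸ (π ⟨i, Nat.lt_of_succ_lt hi⟩).isLt)⟩) := by
  exact rothe_aux π μ hdec hD i hi _ rfl _ _ rfl rfl hmu (Fin.ext hval)
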